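/- Let r ∈ ℝ \ {0} and let u > v ≥ 0 with v ≤ |r|. Set W := (u − v)(u² + 4uv + v²), a := |r|³ + 4u³v³/W, b := −sgn(r)·(3r² + 6u²v²/(u² + 4uv + v²)), c := 3|r| − 12u²v²/W, and d := (u + v)³/W. Then for every x ∈ ℝ one has |x − r|³ ≤ a + b·x + c·x² + d·|x|³, with equality at x = −u·sgn(r) and at x = v·sgn(r). Consequently, for every probability measure P on ℝ with finite third absolute moment, ∫ |x − r|³ dP(x) ≤ a + b·∫ x dP(x) + c·∫ x² dP(x) + d·∫ |x|³ dP(x). -/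

import Mathlib

open MeasureTheory

set_option maxHeartbeats 1600000

private lemma aux_pos (v w s t : ℝ) (hv : 0 ≤ v) (hw : 0 ≤ w) (hs : 0 ≤ s) (ht : 0 ≤ t) :
    (0:ℝ) ≤ w^3*t^3 + 3*w^3*s*t^2 + 3*w^3*s^2*t + 6*v*w^2*t^3 + 18*v*w^2*s*t^2 +
      18*v*w^2*s^2*t + 3*v*w^3*t^2 + 6*v*w^3*s*t + 3*v*w^3*s^2 + 9*v^2*w*t^3 +
      27*v^2*w*s*t^2 + 27*v^2*w*s^2*t + 3*v^2*w*s^3 + 12*v^2*w^2*t^2 + 24*v^2*w^2*s*t +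
      12*v^2*w^2*s^2 + 4*v^3*t^3 + 12*v^3*s*t^2 + 12*v^3*s^2*t + 4*v^3*s^3 +
      15*v^3*w*t^2 + 30*v^3*w*s*t + 15*v^3*w*s^2 + 6*v^4*t^2 + 12*v^4*s*t + 6*v^4*s^2 := by
  positivity

private lemma core (R u v y : ℝ) (hR : 0 < R) (huv : v < u) (hv : 0 ≤ v) (hvR : v ≤ R) :
    |y - R| ^ 3 ≤ (R ^ 3 + 4 * u ^ 3 * v ^ 3 / ((u - v) * (u ^ 2 + 4 * u * v + v ^ 2)))
      - (3 * R ^ 2 + 6 * u ^ 2 * v ^ 2 / (u ^ 2 + 4 * u * v + v ^ 2)) * y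
      + (3 * R - 12 * u ^ 2 * v ^ 2 / ((u - v) * (u ^ 2 + 4 * u * v + v ^ 2))) * y ^ 2
      + (u + v) ^ 3 / ((u - v) * (u ^ 2 + 4 * u * v + v ^ 2)) * |y| ^ 3 := by
  have hu : 0 < u := lt_of_le_of_lt hv huv
  have hQ : 0 < u ^ 2 + 4 * u * v + v ^ 2 := by positivity
  have hW : 0 < (u - v) * (u ^ 2 + 4 * u * v + v ^ 2) := by
    apply mul_pos (by linarith) hQ
  rw [← sub_nonneg]
  have key : ((R ^ 3 + 4 * u ^ 3 * v ^ 3 / ((u - v) * (u ^ 2 + 4 * u * v + v ^ 2)))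
      - (3 * R ^ 2 + 6 * u ^ 2 * v ^ 2 / (u ^ 2 + 4 * u * v + v ^ 2)) * y
      + (3 * R - 12 * u ^ 2 * v ^ 2 / ((u - v) * (u ^ 2 + 4 * u * v + v ^ 2))) * y ^ 2
      + (u + v) ^ 3 / ((u - v) * (u ^ 2 + 4 * u * v + v ^ 2)) * |y| ^ 3 - |y - R| ^ 3)
      * ((u - v) * (u ^ 2 + 4 * u * v + v ^ 2)) =
      ((u - v) * (u ^ 2 + 4 * u * v + v ^ 2)) * R ^ 3 + 4 * u ^ 3 * v ^ 3
      - (3 * R ^ 2 * ((u - v) * (u ^ 2 + 4 * u * v + v ^ 2)) + 6 * u ^ 2 * v ^ 2 * (u - v)) * y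
      + (3 * R * ((u - v) * (u ^ 2 + 4 * u * v + v ^ 2)) - 12 * u ^ 2 * v ^ 2) * y ^ 2
      + (u + v) ^ 3 * |y| ^ 3
      - ((u - v) * (u ^ 2 + 4 * u * v + v ^ 2)) * |y - R| ^ 3 := by
    field_simp [(sub_pos.mpr huv).ne', hQ.ne']
  have main : 0 ≤ ((u - v) * (u ^ 2 + 4 * u * v + v ^ 2)) * R ^ 3 + 4 * u ^ 3 * v ^ 3
      - (3 * R ^ 2 * ((u - v) * (u ^ 2 + 4 * u * v + v ^ 2)) + 6 * u ^ 2 * v ^ 2 * (u - v)) * y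
      + (3 * R * ((u - v) * (u ^ 2 + 4 * u * v + v ^ 2)) - 12 * u ^ 2 * v ^ 2) * y ^ 2
      + (u + v) ^ 3 * |y| ^ 3
      - ((u - v) * (u ^ 2 + 4 * u * v + v ^ 2)) * |y - R| ^ 3 := by
    rcases le_or_gt y 0 with hy | hy
    · rw [abs_of_nonpos hy, abs_of_nonpos (by linarith : y - R ≤ 0)]
      have e : ((u - v) * (u ^ 2 + 4 * u * v + v ^ 2)) * R ^ 3 + 4 * u ^ 3 * v ^ 3
          - (3 * R ^ 2 * ((u - v) * (u ^ 2 + 4 * u * v + v ^ 2)) + 6 * u ^ 2 * v ^ 2 * (u - v)) * y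
          + (3 * R * ((u - v) * (u ^ 2 + 4 * u * v + v ^ 2)) - 12 * u ^ 2 * v ^ 2) * y ^ 2
          + (u + v) ^ 3 * (-y) ^ 3
          - ((u - v) * (u ^ 2 + 4 * u * v + v ^ 2)) * (-(y - R)) ^ 3 =
          2 * v ^ 2 * (y + u) ^ 2 * (2 * u * v - (3 * u + v) * y) := by ring
      rw [e]
      have h1 : 0 ≤ 2 * u * v - (3 * u + v) * y := by nlinarith
      have h2 : 0 ≤ 2 * v ^ 2 * (y + u) ^ 2 := by positivity
      exact mul_nonneg h2 h1
    · rcases le_or_gt y R with hyR | hyR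
      · rw [abs_of_pos hy, abs_of_nonpos (by linarith : y - R ≤ 0)]
        have e : ((u - v) * (u ^ 2 + 4 * u * v + v ^ 2)) * R ^ 3 + 4 * u ^ 3 * v ^ 3
            - (3 * R ^ 2 * ((u - v) * (u ^ 2 + 4 * u * v + v ^ 2)) + 6 * u ^ 2 * v ^ 2 * (u - v)) * y
            + (3 * R * ((u - v) * (u ^ 2 + 4 * u * v + v ^ 2)) - 12 * u ^ 2 * v ^ 2) * y ^ 2
            + (u + v) ^ 3 * y ^ 3
            - ((u - v) * (u ^ 2 + 4 * u * v + v ^ 2)) * (-(y - R)) ^ 3 =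
            2 * u ^ 2 * (y - v) ^ 2 * ((u + 3 * v) * y + 2 * u * v) := by ring
        rw [e]
        have h1 : 0 ≤ (u + 3 * v) * y + 2 * u * v := by nlinarith
        have h2 : 0 ≤ 2 * u ^ 2 * (y - v) ^ 2 := by positivity
        exact mul_nonneg h2 h1
      · rw [abs_of_pos hy, abs_of_pos (by linarith : 0 < y - R)]
        have h := aux_pos v (u - v) (y - R) (R - v) hv (by linarith) (by linarith) (by linarith)
        nlinarith [h]
  nlinarith [key, main, hW]

theorem abs_cube_recentering (r u v : ℝ) (hr : r ≠ 0) (huv : v < u) (hv : 0 ≤ v)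
    (hvr : v ≤ |r|) (W a b c d : ℝ)
    (hW : W = (u - v) * (u ^ 2 + 4 * u * v + v ^ 2))
    (ha : a = |r| ^ 3 + 4 * u ^ 3 * v ^ 3 / W)
    (hb : b = -Real.sign r * (3 * r ^ 2 + 6 * u ^ 2 * v ^ 2 / (u ^ 2 + 4 * u * v + v ^ 2)))
    (hc : c = 3 * |r| - 12 * u ^ 2 * v ^ 2 / W)
    (hd : d = (u + v) ^ 3 / W) :
    (∀ x : ℝ, |x - r| ^ 3 ≤ a + b * x + c * x ^ 2 + d * |x| ^ 3) ∧
      |(-u * Real.sign r) - r| ^ 3 =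
        a + b * (-u * Real.sign r) + c * (-u * Real.sign r) ^ 2 + d * |(-u * Real.sign r)| ^ 3 ∧
      |v * Real.sign r - r| ^ 3 =
        a + b * (v * Real.sign r) + c * (v * Real.sign r) ^ 2 + d * |v * Real.sign r| ^ 3 ∧
      ∀ P : Measure ℝ, IsProbabilityMeasure P → Integrable (fun x => |x| ^ 3) P →
        (∫ x, |x - r| ^ 3 ∂P) ≤
          a + b * (∫ x, x ∂P) + c * (∫ x, x ^ 2 ∂P) + d * ∫ x, |x| ^ 3 ∂P := by
  have hu : 0 < u := lt_of_le_of_lt hv huv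
  have hQ : 0 < u ^ 2 + 4 * u * v + v ^ 2 := by positivity
  have hWpos : 0 < W := by rw [hW]; exact mul_pos (by linarith) hQ
  have hW0 : W ≠ 0 := ne_of_gt hWpos
  have hQ0 : (u ^ 2 + 4 * u * v + v ^ 2) ≠ 0 := ne_of_gt hQ
  have huv0 : u - v ≠ 0 := by intro h; nlinarith
  -- pointwise inequality
  have hpt : ∀ x : ℝ, |x - r| ^ 3 ≤ a + b * x + c * x ^ 2 + d * |x| ^ 3 := by
    intro x
    rcases hr.lt_or_gt with hneg | hpos
    · -- r < 0
      have hsgn : Real.sign r = -1 := Real.sign_of_neg hneg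
      have habs : |r| = -r := abs_of_neg hneg
      have h := core (-r) u v (-x) (by linarith) huv hv (by rw [habs] at hvr; exact hvr)
      have e1 : (-x) - (-r) = -(x - r) := by ring
      rw [e1, abs_neg, abs_neg] at h
      have e2 : a + b * x + c * x ^ 2 + d * |x| ^ 3 =
          ((-r) ^ 3 + 4 * u ^ 3 * v ^ 3 / ((u - v) * (u ^ 2 + 4 * u * v + v ^ 2)))
          - (3 * (-r) ^ 2 + 6 * u ^ 2 * v ^ 2 / (u ^ 2 + 4 * u * v + v ^ 2)) * (-x)
          + (3 * (-r) - 12 * u ^ 2 * v ^ 2 / ((u - v) * (u ^ 2 + 4 * u * v + v ^ 2))) * (-x) ^ 2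
          + (u + v) ^ 3 / ((u - v) * (u ^ 2 + 4 * u * v + v ^ 2)) * |x| ^ 3 := by
        rw [ha, hb, hc, hd, hW, hsgn, habs]; ring
      rw [e2]
      exact h
    · -- r > 0
      have hsgn : Real.sign r = 1 := Real.sign_of_pos hpos
      have habs : |r| = r := abs_of_pos hpos
      have h := core r u v x (by linarith) huv hv (by rw [habs] at hvr; exact hvr)
      have e2 : a + b * x + c * x ^ 2 + d * |x| ^ 3 =
          (r ^ 3 + 4 * u ^ 3 * v ^ 3 / ((u - v) * (u ^ 2 + 4 * u * v + v ^ 2)))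
          - (3 * r ^ 2 + 6 * u ^ 2 * v ^ 2 / (u ^ 2 + 4 * u * v + v ^ 2)) * x
          + (3 * r - 12 * u ^ 2 * v ^ 2 / ((u - v) * (u ^ 2 + 4 * u * v + v ^ 2))) * x ^ 2
          + (u + v) ^ 3 / ((u - v) * (u ^ 2 + 4 * u * v + v ^ 2)) * |x| ^ 3 := by
        rw [ha, hb, hc, hd, hW, hsgn, habs]; ring
      rw [e2]
      exact h
  refine ⟨hpt, ?_, ?_, ?_⟩
  · -- equality at x = -u * sign r
    rcases hr.lt_or_gt with hneg | hpos
    · have hsgn : Real.sign r = -1 := Real.sign_of_neg hneg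
      have habs : |r| = -r := abs_of_neg hneg
      rw [ha, hb, hc, hd, hW, habs, hsgn]
      have e1 : -u * (-1 : ℝ) = u := by ring
      rw [e1, abs_of_pos hu, abs_of_pos (by linarith : (0:ℝ) < u - r)]
      field_simp
      ring
    · have hsgn : Real.sign r = 1 := Real.sign_of_pos hpos
      have habs : |r| = r := abs_of_pos hpos
      rw [ha, hb, hc, hd, hW, habs, hsgn]
      have e1 : -u * (1 : ℝ) = -u := by ring
      rw [e1, abs_of_neg (by linarith : -u < (0:ℝ)),
        abs_of_neg (by linarith : -u - r < 0)]
      field_simp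
      ring
  · -- equality at x = v * sign r
    rcases hr.lt_or_gt with hneg | hpos
    · have hsgn : Real.sign r = -1 := Real.sign_of_neg hneg
      have habs : |r| = -r := abs_of_neg hneg
      have hvr' : v ≤ -r := by rw [habs] at hvr; exact hvr
      rw [ha, hb, hc, hd, hW, habs, hsgn]
      have e1 : v * (-1 : ℝ) = -v := by ring
      rw [e1, abs_of_nonpos (by linarith : -v ≤ (0:ℝ)),
        abs_of_nonneg (by linarith : (0:ℝ) ≤ -v - r)]
      field_simp
      ring
    · have hsgn : Real.sign r = 1 := Real.sign_of_pos hpos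
      have habs : |r| = r := abs_of_pos hpos
      have hvr' : v ≤ r := by rw [habs] at hvr; exact hvr
      rw [ha, hb, hc, hd, hW, habs, hsgn]
      have e1 : v * (1 : ℝ) = v := by ring
      rw [e1, abs_of_nonneg hv, abs_of_nonpos (by linarith : v - r ≤ 0)]
      field_simp
      ring
  · -- integral part
    intro P hP hint3
    have hmeas3 : Integrable (fun x : ℝ => |x| ^ 3) P := hint3
    have hone : Integrable (fun _ : ℝ => (1 : ℝ)) P := integrable_const 1
    have hbound : ∀ x : ℝ, |x| ≤ 1 + |x| ^ 3 := by
      intro x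
      rcases le_or_gt (|x|) 1 with h | h
      · nlinarith [abs_nonneg x, pow_nonneg (abs_nonneg x) 3]
      · nlinarith [abs_nonneg x, mul_nonneg (mul_nonneg (abs_nonneg x)
          (by linarith : (0:ℝ) ≤ |x| - 1)) (by linarith : (0:ℝ) ≤ |x| + 1)]
    have hbound2 : ∀ x : ℝ, x ^ 2 ≤ 1 + |x| ^ 3 := by
      intro x
      rcases le_or_gt (|x|) 1 with h | h
      · nlinarith [abs_nonneg x, pow_nonneg (abs_nonneg x) 3, sq_abs x]
      · nlinarith [abs_nonneg x, sq_abs x, mul_nonneg (mul_nonneg (abs_nonneg x)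
          (abs_nonneg x)) (by linarith : (0:ℝ) ≤ |x| - 1)]
    have hsum : Integrable (fun x : ℝ => 1 + |x| ^ 3) P := hone.add hint3
    have hid : Integrable (fun x : ℝ => x) P := by
      refine hsum.mono (measurable_id.aestronglyMeasurable) (Filter.Eventually.of_forall ?_)
      intro x
      have h3 : (0:ℝ) ≤ 1 + |x| ^ 3 := by positivity
      rw [Real.norm_eq_abs, Real.norm_eq_abs, abs_of_nonneg h3]
      exact hbound x
    have hsq : Integrable (fun x : ℝ => x ^ 2) P := by
      refine hsum.mono ((continuous_pow 2).aestronglyMeasurable) (Filter.Eventually.of_forall ?_)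
      intro x
      have h3 : (0:ℝ) ≤ 1 + |x| ^ 3 := by positivity
      rw [Real.norm_eq_abs, Real.norm_eq_abs, abs_of_nonneg h3, abs_of_nonneg (sq_nonneg x)]
      exact hbound2 x
    have hg : Integrable (fun x : ℝ => a + b * x + c * x ^ 2 + d * |x| ^ 3) P := by
      exact (((integrable_const a).add (hid.const_mul b)).add (hsq.const_mul c)).add
        (hint3.const_mul d)
    have hf : Integrable (fun x : ℝ => |x - r| ^ 3) P := by
      refine hg.mono ?_ (Filter.Eventually.of_forall ?_)
      · exact ((continuous_abs.comp (continuous_id.sub continuous_const)).pow 3).aestronglyMeasurable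
      · intro x
        have h0 : (0:ℝ) ≤ |x - r| ^ 3 := by positivity
        have h1 := hpt x
        rw [Real.norm_eq_abs, Real.norm_eq_abs, abs_of_nonneg h0, abs_of_nonneg (le_trans h0 h1)]
        exact h1
    have hmono := integral_mono hf hg hpt
    have i0 : Integrable (fun _ : ℝ => a) P := integrable_const a
    have i1 : Integrable (fun x : ℝ => b * x) P := hid.const_mul b
    have i2 : Integrable (fun x : ℝ => c * x ^ 2) P := hsq.const_mul c
    have i3 : Integrable (fun x : ℝ => d * |x| ^ 3) P := hint3.const_mul d
    have heq : (∫ x, (a + b * x + c * x ^ 2 + d * |x| ^ 3) ∂P) =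
        a + b * (∫ x, x ∂P) + c * (∫ x, x ^ 2 ∂P) + d * ∫ x, |x| ^ 3 ∂P := by
      have e1 : (∫ x, (a + b * x + c * x ^ 2 + d * |x| ^ 3) ∂P)
          = (∫ x, (a + b * x + c * x ^ 2) ∂P) + ∫ x, d * |x| ^ 3 ∂P :=
        integral_add ((i0.add i1).add i2) i3
      have e2 : (∫ x, (a + b * x + c * x ^ 2) ∂P)
          = (∫ x, (a + b * x) ∂P) + ∫ x, c * x ^ 2 ∂P := integral_add (i0.add i1) i2
      have e3 : (∫ x, (a + b * x) ∂P) = (∫ _, (a:ℝ) ∂P) + ∫ x, b * x ∂P := integral_add i0 i1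
      rw [e1, e2, e3, integral_const, integral_const_mul, integral_const_mul, integral_const_mul]
      simp [measure_univ]
    rw [heq] at hmono
    exact hmono
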